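/- Under the change of variables u = (3/(16π)) a² e^{2κΦ/3}, v = (3/(16π)) a² e^{-2κΦ/3}, p_u = (4π/(3κ)) (a p_a κ + 3 p_Φ) e^{-2κΦ/3} / a², p_v = (4π/(3κ)) (a p_a κ - 3 p_Φ) e^{2κΦ/3} / a² (with κ > 0 a constant, a > 0), the transformation from (a, Φ, p_a, p_Φ) to (u, v, p_u, p_v) is canonical: {u, p_u} = 1, {v, p_v} = 1, {u, v} = 0, {u, p_v} = 0, {v, p_u} = 0, {p_u, p_v} = 0, where brackets are computed with the canonical structure {a, p_a} = 1, {Φ, p_Φ} = 1. -/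

import Mathlib

noncomputable def P (i : Fin 4) : (Fin 4 → ℝ) →L[ℝ] ℝ := ContinuousLinearMap.proj i

lemma hasP (i : Fin 4) (x : Fin 4 → ℝ) : HasFDerivAt (fun y : Fin 4 → ℝ => y i) (P i) x :=
  (P i).hasFDerivAt

lemma congrF {f g : (Fin 4 → ℝ) → ℝ} {L : (Fin 4 → ℝ) →L[ℝ] ℝ} {x : Fin 4 → ℝ}
    (h : HasFDerivAt f L x) (hfg : ∀ y, g y = f y) : HasFDerivAt g L x :=
  h.congr_of_eventuallyEq (Filter.Eventually.of_forall hfg)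



/-- Partial derivative of a phase-space function on ℝ⁴ in the `i`-th coordinate. -/
noncomputable def pd (i : Fin 4) (F : (Fin 4 → ℝ) → ℝ) (x : Fin 4 → ℝ) : ℝ :=
  fderiv ℝ F x (Pi.single i 1)

/-- Canonical Poisson bracket on the phase space with coordinates
(a, Φ, p_a, p_Φ) = (x 0, x 1, x 2, x 3), so that {a, p_a} = 1 and {Φ, p_Φ} = 1. -/
noncomputable def pb (F G : (Fin 4 → ℝ) → ℝ) (x : Fin 4 → ℝ) : ℝ :=
  pd 0 F x * pd 2 G x + pd 1 F x * pd 3 G x - pd 2 F x * pd 0 G x - pd 3 F x * pd 1 G x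

/-- u = (3/(16π)) a² e^{2κΦ/3}. -/
noncomputable def uF (κ : ℝ) : (Fin 4 → ℝ) → ℝ := fun x =>
  (3 / (16 * Real.pi)) * x 0 ^ 2 * Real.exp (2 * κ * x 1 / 3)

/-- v = (3/(16π)) a² e^{-2κΦ/3}. -/
noncomputable def vF (κ : ℝ) : (Fin 4 → ℝ) → ℝ := fun x =>
  (3 / (16 * Real.pi)) * x 0 ^ 2 * Real.exp (-(2 * κ * x 1 / 3))

/-- p_u = (4π/(3κ)) (a p_a κ + 3 p_Φ) e^{-2κΦ/3} / a². -/
noncomputable def puF (κ : ℝ) : (Fin 4 → ℝ) → ℝ := fun x =>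
  (4 * Real.pi / (3 * κ)) * (x 0 * x 2 * κ + 3 * x 3) * Real.exp (-(2 * κ * x 1 / 3)) / x 0 ^ 2

/-- p_v = (4π/(3κ)) (a p_a κ - 3 p_Φ) e^{2κΦ/3} / a². -/
noncomputable def pvF (κ : ℝ) : (Fin 4 → ℝ) → ℝ := fun x =>
  (4 * Real.pi / (3 * κ)) * (x 0 * x 2 * κ - 3 * x 3) * Real.exp (2 * κ * x 1 / 3) / x 0 ^ 2

set_option maxHeartbeats 1000000 in
/-- the map (a, Φ, p_a, p_Φ) ↦ (u, v, p_u, p_v) is a canonical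
transformation: {u, p_u} = 1, {v, p_v} = 1, {u, v} = {u, p_v} = {v, p_u} = {p_u, p_v} = 0. -/
theorem flrw_null_coordinates_canonical (κ : ℝ) (hκ : 0 < κ) :
    ∀ x : Fin 4 → ℝ, 0 < x 0 →
      pb (uF κ) (puF κ) x = 1 ∧ pb (vF κ) (pvF κ) x = 1 ∧
        pb (uF κ) (vF κ) x = 0 ∧ pb (uF κ) (pvF κ) x = 0 ∧
        pb (vF κ) (puF κ) x = 0 ∧ pb (puF κ) (pvF κ) x = 0 := by
  intro x hx
  have hx0 : x 0 ≠ 0 := ne_of_gt hx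
  have hκ0 : κ ≠ 0 := ne_of_gt hκ
  have hπ : Real.pi ≠ 0 := Real.pi_ne_zero
  have hsq : HasFDerivAt (fun y : Fin 4 → ℝ => y 0 ^ 2) (x 0 • P 0 + x 0 • P 0) x :=
    congrF ((hasP 0 x).mul (hasP 0 x)) (fun y => by rw [Pi.mul_apply]; ring)
  have hsq0 : (x 0 : ℝ) ^ 2 ≠ 0 := pow_ne_zero 2 hx0
  have hg1 : HasFDerivAt (fun y : Fin 4 → ℝ => 2 * κ * y 1 / 3) ((2*κ/3) • P 1) x :=
    congrF ((hasP 1 x).const_mul (2*κ/3)) (fun y => by ring)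
  have hg1' : HasFDerivAt (fun y : Fin 4 → ℝ => -(2 * κ * y 1 / 3)) ((-(2*κ)/3) • P 1) x :=
    congrF ((hasP 1 x).const_mul (-(2*κ)/3)) (fun y => by ring)
  have hE := (Real.hasDerivAt_exp (2 * κ * x 1 / 3)).comp_hasFDerivAt x hg1
  have hE' := (Real.hasDerivAt_exp (-(2 * κ * x 1 / 3))).comp_hasFDerivAt x hg1'
  have hN := (((hasP 0 x).mul (hasP 2 x)).mul_const κ).add ((hasP 3 x).const_mul 3)
  have hM := (((hasP 0 x).mul (hasP 2 x)).mul_const κ).sub ((hasP 3 x).const_mul 3)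
  have hinv := (hasDerivAt_inv hx0).comp_hasFDerivAt x (hasP 0 x)
  have hinvsq := hinv.mul hinv
  have hu := congrF (g := uF κ) ((hsq.const_mul (3 / (16 * Real.pi))).mul hE)
    (fun y => by simp [uF, Function.comp]; try ring)
  have hv := congrF (g := vF κ) ((hsq.const_mul (3 / (16 * Real.pi))).mul hE')
    (fun y => by simp [vF, Function.comp]; try ring)
  have hpu := congrF (g := puF κ) (((hN.const_mul (4 * Real.pi / (3 * κ))).mul hE').mul hinvsq)
    (fun y => by simp [puF, Function.comp, div_eq_mul_inv, pow_two, mul_inv]; try ring)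
  have hpv := congrF (g := pvF κ) (((hM.const_mul (4 * Real.pi / (3 * κ))).mul hE).mul hinvsq)
    (fun y => by simp [pvF, Function.comp, div_eq_mul_inv, pow_two, mul_inv]; try ring)
  have PD : ∀ (i : Fin 4) {F : (Fin 4 → ℝ) → ℝ} {L : (Fin 4 → ℝ) →L[ℝ] ℝ},
      HasFDerivAt F L x → pd i F x = L (Pi.single i 1) := by
    intro i F L h; rw [pd, h.fderiv]
  have u0 : pd 0 (uF κ) x = 2 * (3 / (16 * Real.pi)) * x 0 * Real.exp (2 * κ * x 1 / 3) := by
    rw [PD 0 hu]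
    simp only [ContinuousLinearMap.add_apply, ContinuousLinearMap.smul_apply,
      ContinuousLinearMap.sub_apply, P, ContinuousLinearMap.proj_apply,
      Function.comp_apply, Function.comp, Pi.single_apply, smul_eq_mul]
    simp (config := { decide := true })
    try norm_num
    try field_simp
    try ring
  have u1 : pd 1 (uF κ) x = (2 * κ / 3) * (3 / (16 * Real.pi)) * x 0 ^ 2 * Real.exp (2 * κ * x 1 / 3) := by
    rw [PD 1 hu]
    simp only [ContinuousLinearMap.add_apply, ContinuousLinearMap.smul_apply,
      ContinuousLinearMap.sub_apply, P, ContinuousLinearMap.proj_apply,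
      Function.comp_apply, Function.comp, Pi.single_apply, smul_eq_mul]
    simp (config := { decide := true })
    try norm_num
    try field_simp
    try ring
  have u2 : pd 2 (uF κ) x = 0 := by
    rw [PD 2 hu]
    simp only [ContinuousLinearMap.add_apply, ContinuousLinearMap.smul_apply,
      ContinuousLinearMap.sub_apply, P, ContinuousLinearMap.proj_apply,
      Function.comp_apply, Function.comp, Pi.single_apply, smul_eq_mul]
    simp (config := { decide := true })
    try norm_num
    try field_simp
    try ring
  have u3 : pd 3 (uF κ) x = 0 := by
    rw [PD 3 hu]
    simp only [ContinuousLinearMap.add_apply, ContinuousLinearMap.smul_apply,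
      ContinuousLinearMap.sub_apply, P, ContinuousLinearMap.proj_apply,
      Function.comp_apply, Function.comp, Pi.single_apply, smul_eq_mul]
    simp (config := { decide := true })
    try norm_num
    try field_simp
    try ring
  have v0 : pd 0 (vF κ) x = 2 * (3 / (16 * Real.pi)) * x 0 * Real.exp (-(2 * κ * x 1 / 3)) := by
    rw [PD 0 hv]
    simp only [ContinuousLinearMap.add_apply, ContinuousLinearMap.smul_apply,
      ContinuousLinearMap.sub_apply, P, ContinuousLinearMap.proj_apply,
      Function.comp_apply, Function.comp, Pi.single_apply, smul_eq_mul]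
    simp (config := { decide := true })
    try norm_num
    try field_simp
    try ring
  have v1 : pd 1 (vF κ) x = -((2 * κ / 3) * (3 / (16 * Real.pi)) * x 0 ^ 2 * Real.exp (-(2 * κ * x 1 / 3))) := by
    rw [PD 1 hv]
    simp only [ContinuousLinearMap.add_apply, ContinuousLinearMap.smul_apply,
      ContinuousLinearMap.sub_apply, P, ContinuousLinearMap.proj_apply,
      Function.comp_apply, Function.comp, Pi.single_apply, smul_eq_mul]
    simp (config := { decide := true })
    try norm_num
    try field_simp
    try ring
  have v2 : pd 2 (vF κ) x = 0 := by
    rw [PD 2 hv]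
    simp only [ContinuousLinearMap.add_apply, ContinuousLinearMap.smul_apply,
      ContinuousLinearMap.sub_apply, P, ContinuousLinearMap.proj_apply,
      Function.comp_apply, Function.comp, Pi.single_apply, smul_eq_mul]
    simp (config := { decide := true })
    try norm_num
    try field_simp
    try ring
  have v3 : pd 3 (vF κ) x = 0 := by
    rw [PD 3 hv]
    simp only [ContinuousLinearMap.add_apply, ContinuousLinearMap.smul_apply,
      ContinuousLinearMap.sub_apply, P, ContinuousLinearMap.proj_apply,
      Function.comp_apply, Function.comp, Pi.single_apply, smul_eq_mul]
    simp (config := { decide := true })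
    try norm_num
    try field_simp
    try ring
  have pu0 : pd 0 (puF κ) x = 4 * Real.pi / (3 * κ) * Real.exp (-(2 * κ * x 1 / 3)) * (κ * x 2 / x 0 ^ 2) - 2 * (4 * Real.pi / (3 * κ)) * Real.exp (-(2 * κ * x 1 / 3)) * (x 0 * x 2 * κ + 3 * x 3) / x 0 ^ 3 := by
    rw [PD 0 hpu]
    simp only [ContinuousLinearMap.add_apply, ContinuousLinearMap.smul_apply,
      ContinuousLinearMap.sub_apply, P, ContinuousLinearMap.proj_apply,
      Function.comp_apply, Function.comp, Pi.single_apply, smul_eq_mul]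
    simp (config := { decide := true })
    try norm_num
    try field_simp
    try ring
  have pu1 : pd 1 (puF κ) x = -((2 * κ / 3) * (4 * Real.pi / (3 * κ)) * (x 0 * x 2 * κ + 3 * x 3) * Real.exp (-(2 * κ * x 1 / 3)) / x 0 ^ 2) := by
    rw [PD 1 hpu]
    simp only [ContinuousLinearMap.add_apply, ContinuousLinearMap.smul_apply,
      ContinuousLinearMap.sub_apply, P, ContinuousLinearMap.proj_apply,
      Function.comp_apply, Function.comp, Pi.single_apply, smul_eq_mul]
    simp (config := { decide := true })
    try norm_num
    try field_simp
    try ring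
  have pu2 : pd 2 (puF κ) x = 4 * Real.pi / (3 * κ) * κ * Real.exp (-(2 * κ * x 1 / 3)) / x 0 := by
    rw [PD 2 hpu]
    simp only [ContinuousLinearMap.add_apply, ContinuousLinearMap.smul_apply,
      ContinuousLinearMap.sub_apply, P, ContinuousLinearMap.proj_apply,
      Function.comp_apply, Function.comp, Pi.single_apply, smul_eq_mul]
    simp (config := { decide := true })
    try norm_num
    try field_simp
    try ring
  have pu3 : pd 3 (puF κ) x = 3 * (4 * Real.pi / (3 * κ)) * Real.exp (-(2 * κ * x 1 / 3)) / x 0 ^ 2 := by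
    rw [PD 3 hpu]
    simp only [ContinuousLinearMap.add_apply, ContinuousLinearMap.smul_apply,
      ContinuousLinearMap.sub_apply, P, ContinuousLinearMap.proj_apply,
      Function.comp_apply, Function.comp, Pi.single_apply, smul_eq_mul]
    simp (config := { decide := true })
    try norm_num
    try field_simp
    try ring
  have pv0 : pd 0 (pvF κ) x = 4 * Real.pi / (3 * κ) * Real.exp (2 * κ * x 1 / 3) * (κ * x 2 / x 0 ^ 2) - 2 * (4 * Real.pi / (3 * κ)) * Real.exp (2 * κ * x 1 / 3) * (x 0 * x 2 * κ - 3 * x 3) / x 0 ^ 3 := by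
    rw [PD 0 hpv]
    simp only [ContinuousLinearMap.add_apply, ContinuousLinearMap.smul_apply,
      ContinuousLinearMap.sub_apply, P, ContinuousLinearMap.proj_apply,
      Function.comp_apply, Function.comp, Pi.single_apply, smul_eq_mul]
    simp (config := { decide := true })
    try norm_num
    try field_simp
    try ring
  have pv1 : pd 1 (pvF κ) x = (2 * κ / 3) * (4 * Real.pi / (3 * κ)) * (x 0 * x 2 * κ - 3 * x 3) * Real.exp (2 * κ * x 1 / 3) / x 0 ^ 2 := by
    rw [PD 1 hpv]
    simp only [ContinuousLinearMap.add_apply, ContinuousLinearMap.smul_apply,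
      ContinuousLinearMap.sub_apply, P, ContinuousLinearMap.proj_apply,
      Function.comp_apply, Function.comp, Pi.single_apply, smul_eq_mul]
    simp (config := { decide := true })
    try norm_num
    try field_simp
    try ring
  have pv2 : pd 2 (pvF κ) x = 4 * Real.pi / (3 * κ) * κ * Real.exp (2 * κ * x 1 / 3) / x 0 := by
    rw [PD 2 hpv]
    simp only [ContinuousLinearMap.add_apply, ContinuousLinearMap.smul_apply,
      ContinuousLinearMap.sub_apply, P, ContinuousLinearMap.proj_apply,
      Function.comp_apply, Function.comp, Pi.single_apply, smul_eq_mul]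
    simp (config := { decide := true })
    try norm_num
    try field_simp
    try ring
  have pv3 : pd 3 (pvF κ) x = -(3 * (4 * Real.pi / (3 * κ)) * Real.exp (2 * κ * x 1 / 3) / x 0 ^ 2) := by
    rw [PD 3 hpv]
    simp only [ContinuousLinearMap.add_apply, ContinuousLinearMap.smul_apply,
      ContinuousLinearMap.sub_apply, P, ContinuousLinearMap.proj_apply,
      Function.comp_apply, Function.comp, Pi.single_apply, smul_eq_mul]
    simp (config := { decide := true })
    try norm_num
    try field_simp
    try ring
  refine ⟨?_, ?_, ?_, ?_, ?_, ?_⟩ <;>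
    rw [pb] <;>
    simp only [u0, u1, u2, u3, v0, v1, v2, v3, pu0, pu1, pu2, pu3, pv0, pv1, pv2, pv3,
      Real.exp_neg] <;>
    field_simp <;>
    ring
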